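/- There exists a bijection B from the positive integers onto the set of all even binary partitions such that B_1 is the empty partition, the sums |B_k| are nondecreasing, each B_{k+1} is obtained from B_k by an elementary move or by adding a single new part equal to 2, and moreover for every even n \ge 2, writing n = 2^a \cdot b with b odd: the last term of B with sum n is the partition consisting of b parts each equal to 2^a, and the first term of B with sum n is obtained from the last term with sum n-2 by adding one part equal to 2 (for n = 2 it is the single part 2). -/

import Mathlib

/-- An even binary partition: a multiset of parts, each a power of two that is at least 2. -/
def IsEvenBinaryPartition (P : Multiset ℕ) : Prop := ∀ p ∈ P, ∃ k : ℕ, 1 ≤ k ∧ p = 2 ^ k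

/-- `P` and `Q` differ by an elementary move with `k ≥ 1`: `Q` is obtained from `P`
by removing two copies of `2^k` and adding one copy of `2^(k+1)`, or vice versa. -/
def EvenElementaryMove (P Q : Multiset ℕ) : Prop :=
  ∃ k : ℕ, 1 ≤ k ∧
    (Q + {2 ^ k, 2 ^ k} = P + {2 ^ (k + 1)} ∨ P + {2 ^ k, 2 ^ k} = Q + {2 ^ (k + 1)})

namespace Gray

def dbl (P : Multiset ℕ) : Multiset ℕ := P.map (2 * ·)

def L : ℕ → List (Multiset ℕ)
  | 0 => [0]
  | (m+1) =>
    if (m+1) % 2 = 0 then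
      ((L m).reverse.map (· + ({2}:Multiset ℕ))) ++ (L ((m+1)/2)).map dbl
    else
      (L m).reverse.map (· + ({2}:Multiset ℕ))
  decreasing_by all_goals omega

lemma dbl_sum (Q : Multiset ℕ) : (dbl Q).sum = 2 * Q.sum := by
  unfold dbl
  induction Q using Multiset.induction with
  | empty => simp
  | cons a s ihq => simp only [Multiset.map_cons, Multiset.sum_cons, ihq]; ring

lemma dbl_add (P Q : Multiset ℕ) : dbl (P + Q) = dbl P + dbl Q := by
  simp [dbl]

lemma L_zero : L 0 = [0] := by simp [L]

lemma L_odd {m : ℕ} (h : m % 2 = 1) (hm : 1 ≤ m) :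
    L m = (L (m-1)).reverse.map (· + ({2}:Multiset ℕ)) := by
  obtain ⟨m', rfl⟩ : ∃ m', m = m' + 1 := ⟨m - 1, by omega⟩
  rw [L]; simp [show ¬ ((m'+1) % 2 = 0) by omega]

lemma L_even {m : ℕ} (h : m % 2 = 0) (hm : 1 ≤ m) :
    L m = ((L (m-1)).reverse.map (· + ({2}:Multiset ℕ))) ++ (L (m/2)).map dbl := by
  obtain ⟨m', rfl⟩ : ∃ m', m = m' + 1 := ⟨m - 1, by omega⟩
  rw [L]; simp [h]

lemma L_ne_nil (m : ℕ) : L m ≠ [] := by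
  induction m using Nat.strong_induction_on with
  | _ m ih =>
    match m, ih with
    | 0, _ => simp [L_zero]
    | (m+1), ih =>
      rcases Nat.even_or_odd (m+1) with h | h
      · rw [L_even (Nat.even_iff.mp h) (by omega)]
        simp only [ne_eq, List.append_eq_nil_iff, not_and_or]
        left; simp [ih m (by omega)]
      · rw [L_odd (Nat.odd_iff.mp h) (by omega)]
        simp [ih m (by omega)]

lemma mem_L {m : ℕ} {P : Multiset ℕ} (h : P ∈ L m) :
    IsEvenBinaryPartition P ∧ P.sum = 2 * m := by
  induction m using Nat.strong_induction_on generalizing P with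
  | _ m ih =>
    match m, ih with
    | 0, _ =>
      simp [L_zero] at h; subst h
      exact ⟨fun p hp => by simp at hp, by simp⟩
    | (m+1), ih =>
      have key : ∀ P, P ∈ (L m).reverse.map (· + ({2}:Multiset ℕ)) →
          IsEvenBinaryPartition P ∧ P.sum = 2 * (m+1) := by
        intro P hP
        simp only [List.mem_map, List.mem_reverse] at hP
        obtain ⟨Q, hQ, rfl⟩ := hP
        obtain ⟨h1, h2⟩ := ih m (by omega) hQ
        constructor
        · intro p hp
          rcases Multiset.mem_add.mp hp with hp | hp
          · exact h1 p hp
          · simp at hp; exact ⟨1, le_refl 1, by omega⟩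
        · simp [h2]; ring
      rcases Nat.even_or_odd (m+1) with hpar | hpar
      · rw [L_even (Nat.even_iff.mp hpar) (by omega)] at h
        simp only [List.mem_append] at h
        rcases h with h | h
        · exact key P h
        · simp only [List.mem_map] at h
          obtain ⟨Q, hQ, rfl⟩ := h
          obtain ⟨h1, h2⟩ := ih ((m+1)/2) (by omega) hQ
          constructor
          · intro p hp
            simp only [dbl, Multiset.mem_map] at hp
            obtain ⟨q, hq, rfl⟩ := hp
            obtain ⟨k, hk, rfl⟩ := h1 q hq
            exact ⟨k+1, by omega, by rw [pow_succ]; ring⟩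
          · rw [dbl_sum, h2]
            have hm2 : (m+1) % 2 = 0 := Nat.even_iff.mp hpar
            omega
      · rw [L_odd (Nat.odd_iff.mp hpar) (by omega)] at h
        exact key P h


lemma move_symm {P Q : Multiset ℕ} (h : EvenElementaryMove P Q) : EvenElementaryMove Q P := by
  obtain ⟨k, hk, h | h⟩ := h
  · exact ⟨k, hk, Or.inr h⟩
  · exact ⟨k, hk, Or.inl h⟩

lemma move_add {P Q : Multiset ℕ} (X : Multiset ℕ) (h : EvenElementaryMove P Q) :
    EvenElementaryMove (P + X) (Q + X) := by
  obtain ⟨k, hk, h | h⟩ := h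
  · exact ⟨k, hk, Or.inl (by rw [add_right_comm, h, add_right_comm])⟩
  · exact ⟨k, hk, Or.inr (by rw [add_right_comm, h, add_right_comm])⟩

lemma dbl_pair (k : ℕ) : dbl ({2^k, 2^k} : Multiset ℕ) = {2^(k+1), 2^(k+1)} := by
  simp [dbl, Multiset.insert_eq_cons, pow_succ, mul_comm]

lemma dbl_single (k : ℕ) : dbl ({2^k} : Multiset ℕ) = {2^(k+1)} := by
  simp [dbl, pow_succ, mul_comm]

lemma move_dbl {P Q : Multiset ℕ} (h : EvenElementaryMove P Q) :
    EvenElementaryMove (dbl P) (dbl Q) := by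
  obtain ⟨k, hk, h | h⟩ := h
  · exact ⟨k+1, by omega, Or.inl (by rw [← dbl_pair, ← dbl_single, ← dbl_add, ← dbl_add, h])⟩
  · exact ⟨k+1, by omega, Or.inr (by rw [← dbl_pair, ← dbl_single, ← dbl_add, ← dbl_add, h])⟩

lemma head_L {m : ℕ} (hm : 1 ≤ m) :
    (L m).head? = (L (m-1)).getLast?.map (· + ({2}:Multiset ℕ)) := by
  rcases Nat.even_or_odd m with h | h
  · rw [L_even (Nat.even_iff.mp h) hm,
      List.head?_append_of_ne_nil _ (by simp [L_ne_nil]), List.head?_map, List.head?_reverse]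
  · rw [L_odd (Nat.odd_iff.mp h) hm, List.head?_map, List.head?_reverse]

lemma getLast_L_dbl (m : ℕ) : (L (2*m)).getLast? = (L m).getLast?.map dbl := by
  rcases Nat.eq_zero_or_pos m with rfl | hm
  · simp [L_zero]; rfl
  · rw [L_even (by omega) (by omega), List.getLast?_append_of_ne_nil _ (by simp [L_ne_nil]),
      List.getLast?_map, show 2*m/2 = m by omega]

lemma getLast_L_odd {m : ℕ} (h : m % 2 = 1) :
    (L m).getLast? = some (Multiset.replicate m 2) := by
  induction m using Nat.strong_induction_on with
  | _ m ih =>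
    rcases Nat.lt_or_ge m 3 with hm | hm
    · interval_cases m
      · omega
      · rw [L_odd h (by omega), List.getLast?_map, List.getLast?_reverse]
        simp [L_zero, Multiset.replicate_one]
      · omega
    · obtain ⟨j, rfl⟩ : ∃ j, m = j + 2 := ⟨m-2, by omega⟩
      rw [L_odd h (by omega), List.getLast?_map, List.getLast?_reverse,
        show j+2-1 = j+1 by omega, head_L (by omega), show j+1-1 = j by omega,
        ih j (by omega) (by omega)]
      simp only [Option.map_map, Option.map_some, Function.comp_apply,
        Option.some.injEq]
      have hs : ∀ s : Multiset ℕ, s + {2} = 2 ::ₘ s := fun s => by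
        rw [add_comm, Multiset.singleton_add]
      rw [hs, hs, show j+2 = (j+1)+1 by omega, Multiset.replicate_succ, Multiset.replicate_succ]

lemma getLast_L (v c : ℕ) (hc : c % 2 = 1) :
    (L (2^v * c)).getLast? = some (Multiset.replicate c (2^(v+1))) := by
  induction v with
  | zero => simpa using getLast_L_odd (by simpa using hc)
  | succ v ih =>
    have : 2^(v+1) * c = 2 * (2^v * c) := by ring
    rw [this, getLast_L_dbl, ih]
    simp [dbl, Multiset.map_replicate, pow_succ, mul_comm]

lemma junction_move (X : Multiset ℕ) : EvenElementaryMove (X + {2} + {2}) (X + {4}) := by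
  refine ⟨1, le_refl 1, Or.inl ?_⟩
  have h1 : ({2^1, 2^1} : Multiset ℕ) = {2} + {2} := by decide
  have h2 : (2^(1+1) : ℕ) = 4 := by norm_num
  rw [h1, h2]
  abel

lemma chain_L (m : ℕ) : List.IsChain EvenElementaryMove (L m) := by
  induction m using Nat.strong_induction_on with
  | _ m ih =>
    have block1 : ∀ j, j < m → List.IsChain EvenElementaryMove
        ((L j).reverse.map (· + ({2}:Multiset ℕ))) := by
      intro j hj
      rw [List.isChain_map, List.isChain_reverse]
      exact (ih j hj).imp (fun a b hab => move_add _ (move_symm hab))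
    match m with
    | 0 => simp [L_zero]
    | 1 =>
      rw [L_odd (by norm_num) (by norm_num)]
      exact block1 0 (by norm_num)
    | (m+2) =>
      rcases Nat.even_or_odd (m+2) with hpar | hpar
      · have hm2 : (m+2) % 2 = 0 := Nat.even_iff.mp hpar
        rw [L_even hm2 (by omega)]
        refine List.IsChain.append (by simpa using block1 (m+1) (by omega)) ?_ ?_
        · rw [List.isChain_map]
          exact (ih ((m+2)/2) (by omega)).imp (fun a b hab => move_dbl hab)
        · intro x hx y hy
          rw [List.getLast?_map, List.getLast?_reverse] at hx
          rw [List.head?_map] at hy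
          -- x = head (L (m+1)) + {2}, y = dbl (head (L ((m+2)/2)))
          rcases Nat.eq_zero_or_pos m with rfl | hm
          · -- m + 2 = 2
            simp [head_L (show 1 ≤ 1 by norm_num), L_zero] at hx hy
            subst hx; subst hy
            exact ⟨1, le_refl 1, Or.inl (by decide)⟩
          · -- m ≥ 1, so m + 1 ≥ 2 and M := (m+2)/2 ≥ 2
            set M := (m+2)/2 with hM
            have hM2 : 2 ≤ M := by omega
            have e1 : m + 1 - 1 = 2 * (M - 1) := by omega
            rw [show m+2-1 = m+1 by omega, head_L (show 1 ≤ m+1 by omega), e1,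
              getLast_L_dbl] at hx
            rw [head_L (show 1 ≤ M by omega)] at hy
            obtain ⟨D, hD⟩ : ∃ D, (L (M-1)).getLast? = some D :=
              Option.ne_none_iff_exists'.mp (by
                simp [List.getLast?_eq_none_iff, L_ne_nil])
            rw [hD] at hx hy
            simp only [Option.mem_def, Option.some.injEq, Option.map_some] at hx hy
            subst hx; subst hy
            have h4 : dbl ({2} : Multiset ℕ) = {4} := by decide
            rw [dbl_add, h4]
            exact junction_move (dbl D)
      · rw [L_odd (Nat.odd_iff.mp hpar) (by omega)]
        exact block1 (m+1) (by omega)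

lemma complete_L (m : ℕ) (P : Multiset ℕ) (hP : IsEvenBinaryPartition P)
    (hsum : P.sum = 2 * m) : P ∈ L m := by
  induction m using Nat.strong_induction_on generalizing P with
  | _ m ih =>
    match m with
    | 0 =>
      have : P = 0 := by
        by_contra h
        obtain ⟨p, hp⟩ := Multiset.exists_mem_of_ne_zero h
        obtain ⟨k, hk, rfl⟩ := hP p hp
        have h1 : 2^k ≤ P.sum := Multiset.le_sum_of_mem hp
        have h2 : 2 ≤ 2^k := by
          calc 2 = 2^1 := by norm_num
          _ ≤ 2^k := Nat.pow_le_pow_right (by norm_num) hk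
        omega
      rw [this, L_zero]; simp
    | (m+1) =>
      by_cases h2 : 2 ∈ P
      · -- P = Q + {2}
        set Q := P.erase 2 with hQ
        have hPQ : P = Q + {2} := by
          rw [add_comm, Multiset.singleton_add, hQ, Multiset.cons_erase h2]
        have hQebp : IsEvenBinaryPartition Q := fun p hp => hP p (Multiset.mem_of_mem_erase hp)
        have hQsum : Q.sum = 2 * m := by
          have := congrArg Multiset.sum hPQ
          simp at this
          omega
        have hQmem : Q ∈ L m := ih m (by omega) Q hQebp hQsum
        have hmem1 : P ∈ (L m).reverse.map (· + ({2}:Multiset ℕ)) := by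
          rw [hPQ]
          exact List.mem_map.mpr ⟨Q, List.mem_reverse.mpr hQmem, rfl⟩
        rcases Nat.even_or_odd (m+1) with hpar | hpar
        · rw [L_even (Nat.even_iff.mp hpar) (by omega)]
          exact List.mem_append_left _ (by simpa using hmem1)
        · rw [L_odd (Nat.odd_iff.mp hpar) (by omega)]
          simpa using hmem1
      · -- all parts ≥ 4, P = dbl R
        have hparts : ∀ p ∈ P, ∃ k, 2 ≤ k ∧ p = 2^k := by
          intro p hp
          obtain ⟨k, hk, rfl⟩ := hP p hp
          refine ⟨k, ?_, rfl⟩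
          rcases Nat.lt_or_ge k 2 with hk2 | hk2
          · interval_cases k
            · exact absurd hp h2
          · exact hk2
        have h4dvd : 4 ∣ P.sum := by
          refine Multiset.dvd_sum ?_
          intro p hp
          obtain ⟨k, hk, rfl⟩ := hparts p hp
          exact (show (4:ℕ) = 2^2 from rfl) ▸ pow_dvd_pow 2 hk
        have hmeven : (m+1) % 2 = 0 := by omega
        set R := P.map (· / 2) with hR
        have hPR : P = dbl R := by
          rw [hR, dbl, Multiset.map_map]
          symm
          rw [show P = Multiset.map id P by simp]
          simp only [Multiset.map_map]
          refine Multiset.map_congr rfl ?_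
          intro p hp
          simp only [Function.comp_apply, id_eq] at *
          obtain ⟨k, hk, rfl⟩ := hparts p hp
          obtain ⟨k', rfl⟩ : ∃ k', k = k' + 1 := ⟨k-1, by omega⟩
          rw [pow_succ]
          omega
        have hRebp : IsEvenBinaryPartition R := by
          intro r hr
          rw [hR] at hr
          obtain ⟨p, hp, rfl⟩ := Multiset.mem_map.mp hr
          obtain ⟨k, hk, rfl⟩ := hparts p hp
          obtain ⟨k', rfl⟩ : ∃ k', k = k' + 1 := ⟨k-1, by omega⟩
          refine ⟨k', by omega, ?_⟩
          rw [pow_succ]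
          omega
        have hRsum : R.sum = 2 * ((m+1)/2) := by
          have : (dbl R).sum = 2 * (m+1) := by rw [← hPR]; exact hsum
          rw [dbl_sum] at this
          omega
        have hRmem : R ∈ L ((m+1)/2) := ih ((m+1)/2) (by omega) R hRebp hRsum
        rw [L_even hmeven (by omega)]
        refine List.mem_append_right _ ?_
        rw [hPR]
        exact List.mem_map.mpr ⟨R, hRmem, rfl⟩

lemma two_not_mem_dbl {R : Multiset ℕ} : (2:ℕ) ∉ dbl R ∨ 1 ∈ R := by
  by_cases h : (2:ℕ) ∈ dbl R
  · right
    obtain ⟨r, hr, h2⟩ := Multiset.mem_map.mp h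
    have : r = 1 := by omega
    exact this ▸ hr
  · left; exact h

lemma nodup_L (m : ℕ) : (L m).Nodup := by
  induction m using Nat.strong_induction_on with
  | _ m ih =>
    have hinj : Function.Injective (· + ({2}:Multiset ℕ)) := fun a b hab => by
      simpa using hab
    have block1 : ∀ j, j < m → ((L j).reverse.map (· + ({2}:Multiset ℕ))).Nodup :=
      fun j hj => (List.nodup_reverse.mpr (ih j hj)).map hinj
    match m with
    | 0 => simp [L_zero]
    | (m+1) =>
      rcases Nat.even_or_odd (m+1) with hpar | hpar
      · rw [L_even (Nat.even_iff.mp hpar) (by omega)]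
        refine List.Nodup.append (by simpa using block1 m (by omega)) ?_ ?_
        · refine (ih ((m+1)/2) (by omega)).map ?_
          exact Multiset.map_injective (fun a b hab => by omega)
        · intro x hx hx2
          simp only [List.mem_map, List.mem_reverse] at hx hx2
          obtain ⟨Q, hQ, rfl⟩ := hx
          obtain ⟨R, hR, hQR⟩ := hx2
          have h2mem : (2:ℕ) ∈ Q + {2} := by simp
          rw [← hQR] at h2mem
          rcases two_not_mem_dbl (R := R) with h | h
          · exact h h2mem
          · obtain ⟨k, hk, hk2⟩ := (mem_L hR).1 1 h
            have : 2 ≤ 2^k := by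
              calc 2 = 2^1 := by norm_num
              _ ≤ 2^k := Nat.pow_le_pow_right (by norm_num) hk
            omega
      · rw [L_odd (Nat.odd_iff.mp hpar) (by omega)]
        simpa using block1 m (by omega)


def S : ℕ → ℕ
  | 0 => 0
  | m+1 => S m + (L m).length

lemma S_lt_succ (m : ℕ) : S m < S (m+1) := by
  have : 0 < (L m).length := List.length_pos_iff.mpr (L_ne_nil m)
  simp [S]
  omega

lemma S_strictMono : StrictMono S := strictMono_nat_of_lt_succ S_lt_succ

lemma le_S (m : ℕ) : m ≤ S m := S_strictMono.le_apply

def lev (k : ℕ) : ℕ := Nat.findGreatest (fun m => S m ≤ k) k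

lemma S_lev_le (k : ℕ) : S (lev k) ≤ k := by
  have h0 : S 0 ≤ k := by simp [S]
  exact Nat.findGreatest_spec (P := fun m => S m ≤ k) (Nat.zero_le k) h0

lemma lt_S_lev_succ (k : ℕ) : k < S (lev k + 1) := by
  by_contra h
  push_neg at h
  have h1 : lev k + 1 ≤ k := le_trans (le_S _) h
  exact Nat.findGreatest_is_greatest (Nat.lt_succ_self _) h1 h

lemma lev_eq {m k : ℕ} (h1 : S m ≤ k) (h2 : k < S (m+1)) : lev k = m := by
  rcases lt_trichotomy (lev k) m with h | h | h
  · have : S (lev k + 1) ≤ S m := S_strictMono.monotone (by omega)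
    have := lt_S_lev_succ k
    omega
  · exact h
  · have : S (m + 1) ≤ S (lev k) := S_strictMono.monotone (by omega)
    have := S_lev_le k
    omega

lemma lev_mono : Monotone lev := by
  intro k k' hk
  by_contra h
  push_neg at h
  have h1 : lev k' + 1 ≤ lev k := by omega
  have h2 : S (lev k' + 1) ≤ S (lev k) := S_strictMono.monotone h1
  have := S_lev_le k
  have := lt_S_lev_succ k'
  omega

def B0 (k : ℕ) : Multiset ℕ := (L (lev k)).getD (k - S (lev k)) 0

lemma S_succ (m : ℕ) : S (m+1) = S m + (L m).length := rfl

lemma B0_eq (m i : ℕ) (h : i < (L m).length) :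
    B0 (S m + i) = (L m).get ⟨i, h⟩ := by
  have hl : lev (S m + i) = m := lev_eq (by omega) (by rw [S_succ]; omega)
  simp only [B0, hl, Nat.add_sub_cancel_left]
  exact List.getD_eq_getElem _ _ h

lemma B0_mem (k : ℕ) : B0 k ∈ L (lev k) := by
  have h1 := S_lev_le k
  have h2 := lt_S_lev_succ k
  rw [S_succ] at h2
  have hi : k - S (lev k) < (L (lev k)).length := by omega
  have : k = S (lev k) + (k - S (lev k)) := by omega
  rw [B0, List.getD_eq_getElem _ _ hi]
  exact List.getElem_mem _

lemma B0_sum (k : ℕ) : (B0 k).sum = 2 * lev k := (mem_L (B0_mem k)).2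

lemma B0_ebp (k : ℕ) : IsEvenBinaryPartition (B0 k) := (mem_L (B0_mem k)).1

lemma B0_inj : Function.Injective B0 := by
  intro k k' h
  have hlev : lev k = lev k' := by
    have := B0_sum k
    rw [h, B0_sum k'] at this
    omega
  have h1 := S_lev_le k
  have h2 := lt_S_lev_succ k
  rw [S_succ] at h2
  have h1' := S_lev_le k'
  have h2' := lt_S_lev_succ k'
  rw [S_succ] at h2'
  have hi : k - S (lev k) < (L (lev k)).length := by omega
  have hi' : k' - S (lev k') < (L (lev k')).length := by omega
  rw [B0, List.getD_eq_getElem _ _ hi] at h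
  rw [B0, List.getD_eq_getElem _ _ hi'] at h
  have hg : (L (lev k))[k - S (lev k)]? = (L (lev k))[k' - S (lev k')]? := by
    rw [List.getElem?_eq_getElem hi, h]; simp [hlev]
  have := (List.getElem?_inj hi (nodup_L (lev k))).mp hg
  have hS : S (lev k) = S (lev k') := by rw [hlev]
  omega

lemma B0_surj (P : Multiset ℕ) (hP : IsEvenBinaryPartition P) : ∃ k, B0 k = P := by
  have heven : 2 ∣ P.sum := by
    refine Multiset.dvd_sum ?_
    intro p hp
    obtain ⟨k, hk, rfl⟩ := hP p hp
    exact (show (2:ℕ) = 2^1 from rfl) ▸ pow_dvd_pow 2 hk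
  obtain ⟨m, hm⟩ := heven
  have hmem : P ∈ L m := complete_L m P hP hm
  obtain ⟨i, hi⟩ := List.get_of_mem hmem
  exact ⟨S m + i, by rw [B0_eq m i i.isLt]; simpa using hi⟩

lemma B0_step (k : ℕ) :
    EvenElementaryMove (B0 k) (B0 (k+1)) ∨ B0 (k+1) = B0 k + {2} := by
  have h1 := S_lev_le k
  have h2 := lt_S_lev_succ k
  rw [S_succ] at h2
  set m := lev k with hm
  have hi : k - S m < (L m).length := by omega
  have hk : k = S m + (k - S m) := by omega
  by_cases hlast : k + 1 < S m + (L m).length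
  · -- same level
    left
    have hi1 : k + 1 - S m < (L m).length := by omega
    have e1 : B0 k = (L m).get ⟨k - S m, hi⟩ := by
      conv_lhs => rw [hk]
      exact B0_eq m _ hi
    have e2 : B0 (k+1) = (L m).get ⟨k + 1 - S m, hi1⟩ := by
      have hk1 : k + 1 = S m + (k + 1 - S m) := by omega
      conv_lhs => rw [hk1]
      exact B0_eq m _ hi1
    rw [e1, e2]
    have := List.isChain_iff_getElem.mp (chain_L m) (k - S m) (by omega)
    simp only [List.get_eq_getElem]
    convert this using 3
    omega
  · -- next level
    right
    have hk1 : k + 1 = S (m+1) := by rw [S_succ]; omega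
    have e1 : B0 k = (L m).get ⟨k - S m, hi⟩ := by
      conv_lhs => rw [hk]
      exact B0_eq m _ hi
    have hlastidx : k - S m = (L m).length - 1 := by omega
    have hlast' : (L m).get ⟨k - S m, hi⟩ = (L m).getLast (L_ne_nil m) := by
      rw [List.getLast_eq_getElem]
      congr 1
      simp [hlastidx]
    have e2 : B0 (k+1) = (L (m+1)).get ⟨0, List.length_pos_iff.mpr (L_ne_nil (m+1))⟩ := by
      have hk2 : k + 1 = S (m+1) + 0 := by omega
      conv_lhs => rw [hk2]
      exact B0_eq (m+1) 0 _
    have hhead : (L (m+1)).head? = some ((L (m+1)).get ⟨0, List.length_pos_iff.mpr (L_ne_nil (m+1))⟩) := by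
      rw [List.head?_eq_head (L_ne_nil (m+1)), List.head_eq_getElem_zero (L_ne_nil (m+1))]
      rfl
    have hlq : (L m).getLast? = some ((L m).getLast (L_ne_nil m)) :=
      List.getLast?_eq_getLast _
    have := head_L (m := m+1) (by omega)
    rw [hhead] at this
    simp only [Nat.add_sub_cancel] at this
    rw [hlq] at this
    simp only [Option.some.injEq, Option.map_some] at this
    rw [e1, e2, this, hlast']


lemma lev_S (m : ℕ) : lev (S m) = m := lev_eq (le_refl _) (S_lt_succ m)

lemma lev_ge {t k : ℕ} (h : S t ≤ k) : t ≤ lev k := by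
  by_contra hc
  push_neg at hc
  have : S (lev k + 1) ≤ S t := S_strictMono.monotone (by omega)
  have := lt_S_lev_succ k
  omega

lemma lev_lt {t k : ℕ} (h : k < S t) : lev k < t := by
  by_contra hc
  push_neg at hc
  have : S t ≤ S (lev k) := S_strictMono.monotone hc
  have := S_lev_le k
  omega

lemma B0_first (m : ℕ) : B0 (S m) = (L m).head (L_ne_nil m) := by
  have h0 : 0 < (L m).length := List.length_pos_iff.mpr (L_ne_nil m)
  have := B0_eq m 0 h0
  simp only [Nat.add_zero] at this
  rw [this, List.get_eq_getElem]
  exact (List.head_eq_getElem_zero (L_ne_nil m)).symm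

lemma B0_last (m : ℕ) : B0 (S (m+1) - 1) = (L m).getLast (L_ne_nil m) := by
  have h0 : 0 < (L m).length := List.length_pos_iff.mpr (L_ne_nil m)
  have hi : (L m).length - 1 < (L m).length := by omega
  have heq : S (m+1) - 1 = S m + ((L m).length - 1) := by
    rw [S_succ]; omega
  rw [heq, B0_eq m _ hi, List.getLast_eq_getElem]; rfl

lemma head_eq_getLast_add (m : ℕ) :
    (L (m+1)).head (L_ne_nil (m+1)) = (L m).getLast (L_ne_nil m) + {2} := by
  have h := head_L (m := m+1) (by omega)
  rw [List.head?_eq_head (L_ne_nil (m+1))] at h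
  simp only [Nat.add_sub_cancel] at h
  rw [List.getLast?_eq_getLast (L_ne_nil m)] at h
  simp only [Option.some.injEq, Option.map_some] at h
  exact h

lemma getLast_val (v c : ℕ) (hc : c % 2 = 1) :
    (L (2^v * c)).getLast (L_ne_nil _) = Multiset.replicate c (2^(v+1)) := by
  have h := getLast_L v c hc
  rw [List.getLast?_eq_getLast (L_ne_nil _)] at h
  simpa using h

end Gray

theorem gray_sequence_first_last_of_each_sum :
    ∃ B : ℕ+ → Multiset ℕ,
      (∀ k, IsEvenBinaryPartition (B k)) ∧
      Function.Injective B ∧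
      (∀ P : Multiset ℕ, IsEvenBinaryPartition P → ∃ k, B k = P) ∧
      B 1 = 0 ∧
      Monotone (fun k => (B k).sum) ∧
      (∀ k, EvenElementaryMove (B k) (B (k + 1)) ∨ B (k + 1) = B k + {2}) ∧
      (∀ n a c : ℕ, 2 ≤ n → Even n → Odd c → n = 2 ^ a * c →
        -- the last term of B with sum n consists of c parts equal to 2^a
        (∃ kL : ℕ+, B kL = Multiset.replicate c (2 ^ a) ∧
          ∀ l : ℕ+, kL < l → (B l).sum ≠ n) ∧
        -- the first term of B with sum n is the last term with sum n-2 plus one part 2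
        (∃ kF kP : ℕ+, (B kF).sum = n ∧ (∀ l : ℕ+, l < kF → (B l).sum ≠ n) ∧
          (B kP).sum = n - 2 ∧ (∀ l : ℕ+, kP < l → (B l).sum ≠ n - 2) ∧
          B kF = B kP + {2})) := by
  classical
  refine ⟨fun p => Gray.B0 (p.val - 1), ?_, ?_, ?_, ?_, ?_, ?_, ?_⟩
  · intro k; exact Gray.B0_ebp _
  · intro p q h
    have h2 : p.val - 1 = q.val - 1 := Gray.B0_inj h
    have hp : 1 ≤ p.val := p.2
    have hq : 1 ≤ q.val := q.2
    exact PNat.coe_injective (by omega)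
  · intro P hP
    obtain ⟨k, hk⟩ := Gray.B0_surj P hP
    exact ⟨⟨k+1, Nat.succ_pos k⟩, by simpa using hk⟩
  · have h := Gray.B0_first 0
    simp only [show Gray.S 0 = 0 from rfl] at h
    simpa [Gray.L_zero] using h
  · intro p q hpq
    simp only [Gray.B0_sum]
    have : p.val ≤ q.val := hpq
    exact Nat.mul_le_mul_left 2 (Gray.lev_mono (by omega))
  · intro k
    have hk : 1 ≤ k.val := k.2
    simp only [PNat.add_coe, PNat.one_coe]
    rw [show k.val + 1 - 1 = (k.val - 1) + 1 by omega]
    exact Gray.B0_step (k.val - 1)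
  · intro n a c hn heven hodd hnac
    have hc1 : c % 2 = 1 := Nat.odd_iff.mp hodd
    have ha : 1 ≤ a := by
      rcases Nat.eq_zero_or_pos a with rfl | h
      · simp at hnac
        rw [Nat.even_iff] at heven
        omega
      · exact h
    obtain ⟨m, hn2m⟩ : ∃ m, n = 2 * m := ⟨n/2, by rcases heven with ⟨t,ht⟩; omega⟩
    have hmval : m = 2^(a-1) * c := by
      obtain ⟨a', rfl⟩ : ∃ a', a = a' + 1 := ⟨a-1, by omega⟩
      have hx : 2 * m = 2 * (2^a' * c) := by rw [← hn2m, hnac, pow_succ]; ring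
      simpa [Nat.add_sub_cancel] using Nat.eq_of_mul_eq_mul_left (by norm_num) hx
    have hm1 : 1 ≤ m := by omega
    constructor
    · -- last term with sum n
      have hpos : 0 < Gray.S (m+1) := by
        have := Gray.le_S (m+1); omega
      refine ⟨⟨Gray.S (m+1), hpos⟩, ?_, ?_⟩
      · show Gray.B0 (Gray.S (m+1) - 1) = _
        rw [Gray.B0_last m]
        have := Gray.getLast_val (a-1) c hc1
        rw [show a - 1 + 1 = a by omega, ← hmval] at this
        exact this
      · intro l hl
        have hlv : Gray.S (m+1) < l.val := hl
        have : m + 1 ≤ Gray.lev (l.val - 1) := Gray.lev_ge (by omega)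
        rw [Gray.B0_sum]
        omega
    · -- first term with sum n
      have hposF : 0 < Gray.S m + 1 := by omega
      have hposP : 0 < Gray.S m := by
        have := Gray.le_S m; omega
      refine ⟨⟨Gray.S m + 1, hposF⟩, ⟨Gray.S m, hposP⟩, ?_, ?_, ?_, ?_, ?_⟩
      · show (Gray.B0 (Gray.S m + 1 - 1)).sum = n
        rw [show Gray.S m + 1 - 1 = Gray.S m from rfl, Gray.B0_sum, Gray.lev_S]
        omega
      · intro l hl
        have hlv : l.val < Gray.S m + 1 := hl
        have hl1 : 1 ≤ l.val := l.2
        have : Gray.lev (l.val - 1) < m := Gray.lev_lt (by omega)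
        rw [Gray.B0_sum]
        omega
      · show (Gray.B0 (Gray.S m - 1)).sum = n - 2
        obtain ⟨m', rfl⟩ : ∃ m', m = m' + 1 := ⟨m-1, by omega⟩
        rw [Gray.B0_last m']
        have hsum := (Gray.mem_L (List.getLast_mem (Gray.L_ne_nil m'))).2
        rw [hsum]
        omega
      · intro l hl
        have hlv : Gray.S m < l.val := hl
        have : m ≤ Gray.lev (l.val - 1) := Gray.lev_ge (by omega)
        rw [Gray.B0_sum]
        omega
      · show Gray.B0 (Gray.S m + 1 - 1) = Gray.B0 (Gray.S m - 1) + {2}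
        obtain ⟨m', rfl⟩ : ∃ m', m = m' + 1 := ⟨m-1, by omega⟩
        rw [show Gray.S (m'+1) + 1 - 1 = Gray.S (m'+1) from rfl,
          Gray.B0_first, Gray.B0_last, Gray.head_eq_getLast_add]
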